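/- Let n be a positive integer and let S : Mₙ(ℂ)³ → ℂ be the function S(x,y,z) = Tr([x,y]·z). A point (x,y,z) ∈ Mₙ(ℂ)³ is a critical point of S (i.e. the Fréchet derivative of S at (x,y,z) is the zero linear map) if and only if the three commutators vanish: [x,y] = [y,z] = [z,x] = 0. -/

import Mathlib

attribute [local instance] Matrix.linftyOpNormedAddCommGroup Matrix.linftyOpNormedRing
  Matrix.linftyOpNormedAlgebra

open Matrix

lemma trace_single_mul {n : ℕ} (i j : Fin n) (M : Matrix (Fin n) (Fin n) ℂ) :
    (Matrix.single i j (1:ℂ) * M).trace = M j i := by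
  simp [Matrix.trace, Matrix.diag, Matrix.mul_apply, Matrix.single, ite_and, Finset.sum_ite_eq]

lemma eq_zero_of_trace_mul {n : ℕ} (M : Matrix (Fin n) (Fin n) ℂ)
    (h : ∀ u : Matrix (Fin n) (Fin n) ℂ, (u * M).trace = 0) : M = 0 := by
  ext j i
  have := h (Matrix.single i j 1)
  rwa [trace_single_mul] at this

lemma comm_trace {n : ℕ} (a b c : Matrix (Fin n) (Fin n) ℂ) :
    ((a * b - b * a) * c).trace = (a * (b * c - c * b)).trace := by
  rw [sub_mul, mul_sub, Matrix.trace_sub, Matrix.trace_sub, mul_assoc]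
  congr 1
  rw [mul_assoc, Matrix.trace_mul_comm, mul_assoc]

lemma comm_trace' {n : ℕ} (a b c : Matrix (Fin n) (Fin n) ℂ) :
    ((a * b - b * a) * c).trace = (b * (c * a - a * c)).trace := by
  rw [sub_mul, mul_sub, Matrix.trace_sub, Matrix.trace_sub]
  congr 1
  · rw [mul_assoc, Matrix.trace_mul_comm, mul_assoc]
  · rw [mul_assoc]


/-- A point `(x,y,z)` is a critical point of the cubic potential `S(x,y,z) = Tr([x,y]·z)`
(meaning its Fréchet derivative vanishes there) if and only if the three commutators
`[x,y]`, `[y,z]` and `[z,x]` all vanish. -/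
theorem critical_point_iff_commuting_triple (n : ℕ) (hn : 0 < n)
    (S : Matrix (Fin n) (Fin n) ℂ × Matrix (Fin n) (Fin n) ℂ × Matrix (Fin n) (Fin n) ℂ → ℂ)
    (hS : ∀ p, S p = ((p.1 * p.2.1 - p.2.1 * p.1) * p.2.2).trace)
    (x y z : Matrix (Fin n) (Fin n) ℂ) :
    fderiv ℂ S (x, y, z) = 0 ↔
      x * y - y * x = 0 ∧ y * z - z * y = 0 ∧ z * x - x * z = 0 := by
  let E := Matrix (Fin n) (Fin n) ℂ
  have hSfun : S = fun p : E × E × E => ((p.1 * p.2.1 - p.2.1 * p.1) * p.2.2).trace :=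
    funext hS
  -- trace as a continuous linear map
  let T : @ContinuousLinearMap ℂ ℂ _ _ (RingHom.id ℂ) E
      PseudoMetricSpace.toUniformSpace.toTopologicalSpace _ ℂ _ _ _ _ :=
    { Matrix.traceLinearMap (Fin n) ℂ ℂ with
      cont := (Matrix.traceLinearMap (Fin n) ℂ ℂ).continuous_of_finiteDimensional }
  have h1 : HasFDerivAt (fun p : E × E × E => p.1) _
      (x, y, z) := hasFDerivAt_fst (𝕜 := ℂ)
  have h2 := (hasFDerivAt_snd (𝕜 := ℂ) (p := ((x, y, z) : E × E × E))).fst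
  have h3 := (hasFDerivAt_snd (𝕜 := ℂ) (p := ((x, y, z) : E × E × E))).snd
  have hmul : HasFDerivAt (fun p : E × E × E => (p.1 * p.2.1 - p.2.1 * p.1) * p.2.2) _
      (x, y, z) := ((h1.mul' h2).sub (h2.mul' h1)).mul' h3
  have htot := T.hasFDerivAt.comp ((x, y, z) : E × E × E) hmul
  have hfun2 : (⇑T ∘ fun p : E × E × E => (p.1 * p.2.1 - p.2.1 * p.1) * p.2.2) = S := by
    funext p; rw [hS p]; rfl
  rw [hfun2] at htot
  rw [show fderiv ℂ S (x, y, z) = _ from htot.fderiv]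
  refine ContinuousLinearMap.ext_iff.trans ?_
  show (∀ p, _ = (0 : ℂ)) ↔ _
  have hT : ∀ m : E, T m = m.trace := fun _ => rfl
  simp only [ContinuousLinearMap.zero_apply, ContinuousLinearMap.coe_comp',
    Function.comp_apply, ContinuousLinearMap.add_apply, ContinuousLinearMap.smul_apply,
    ContinuousLinearMap.sub_apply, ContinuousLinearMap.smulRight_apply,
    ContinuousLinearMap.coe_fst', ContinuousLinearMap.coe_snd', smul_eq_mul, Prod.forall, hT,
    Pi.mul_apply, Pi.sub_apply, op_smul_eq_mul]
  constructor
  · intro h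
    refine ⟨?_, ?_, ?_⟩
    · apply eq_zero_of_trace_mul
      intro u
      have hu := h 0 0 u
      simp only [Matrix.mul_zero, Matrix.zero_mul, mul_zero, zero_mul, add_zero, zero_add,
        sub_zero, zero_sub, Matrix.trace_zero] at hu
      rwa [Matrix.trace_mul_comm] at hu
    · apply eq_zero_of_trace_mul
      intro u
      have hu := h u 0 0
      simp only [Matrix.mul_zero, Matrix.zero_mul, mul_zero, zero_mul, add_zero, zero_add,
        sub_zero, zero_sub, Matrix.trace_zero] at hu
      rwa [comm_trace] at hu
    · apply eq_zero_of_trace_mul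
      intro u
      have hu := h 0 u 0
      simp only [Matrix.mul_zero, Matrix.zero_mul, mul_zero, zero_mul, add_zero, zero_add,
        sub_zero, zero_sub, Matrix.trace_zero] at hu
      rwa [comm_trace'] at hu
  · rintro ⟨hxy, hyz, hzx⟩ a a1 b
    have hsplit : x * a1 + a * y - (y * a + a1 * x) =
        (a * y - y * a) + (x * a1 - a1 * x) := by abel
    rw [hxy, hsplit, Matrix.zero_mul, add_mul, Matrix.trace_add, Matrix.trace_add,
      comm_trace, comm_trace', hyz, hzx]
    simp
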